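/- Given a geometric classical r-matrix datum on A with V invariant under every a¹ᵢ and b¹ⱼ, the ℂ-linear map ρ: V* → Der(A) defined by ρ(x) = Σᵢ x(a⁰ᵢ)·a¹ᵢ + Σⱼ x(b⁰ⱼ)·b¹ⱼ is a Lie algebra homomorphism from (V*, [·,·]) to Der(A): ρ([x,y]) = [ρ(x), ρ(y)] for all x,y ∈ V*. -/
import Mathlib


open TensorProduct

set_option synthInstance.maxHeartbeats 1000000
set_option maxHeartbeats 1000000

/-- A *geometric classical r-matrix datum* on a commutative ℂ-algebra `A`:
finite families `a¹ᵢ, b¹ⱼ` of derivations and `a⁰ᵢ, b⁰ⱼ` of elements of `A`,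
each linearly independent over ℂ, satisfying the three components (E1)–(E3)
of the classical Yang–Baxter equation. -/
structure GeomRMatrixDatum (A : Type*) [CommRing A] [Algebra ℂ A] where
  m : ℕ
  n : ℕ
  a1 : Fin m → Derivation ℂ A A
  a0 : Fin m → A
  b1 : Fin n → Derivation ℂ A A
  b0 : Fin n → A
  indep_a1 : LinearIndependent ℂ a1
  indep_a0 : LinearIndependent ℂ a0
  indep_b1 : LinearIndependent ℂ b1
  indep_b0 : LinearIndependent ℂ b0
  E1 : ∑ i, ∑ k, (⁅a1 i, a1 k⁆ ⊗ₜ[ℂ] (a0 i ⊗ₜ[ℂ] a0 k))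
      = ∑ i, ∑ k, (a1 i ⊗ₜ[ℂ] ((a1 k) (a0 i) ⊗ₜ[ℂ] a0 k))
      + ∑ i, ∑ l, (a1 i ⊗ₜ[ℂ] (b0 l ⊗ₜ[ℂ] (b1 l) (a0 i)))
  E2 : ∑ j, ∑ k, ((a1 k) (b0 j) ⊗ₜ[ℂ] (b1 j ⊗ₜ[ℂ] a0 k))
      = ∑ j, ∑ k, (b0 j ⊗ₜ[ℂ] (⁅b1 j, a1 k⁆ ⊗ₜ[ℂ] a0 k))
      + ∑ j, ∑ k, (b0 j ⊗ₜ[ℂ] (a1 k ⊗ₜ[ℂ] (b1 j) (a0 k)))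
  E3 : ∑ i, ∑ l, ((a1 i) (b0 l) ⊗ₜ[ℂ] (a0 i ⊗ₜ[ℂ] b1 l))
      + ∑ j, ∑ l, (b0 j ⊗ₜ[ℂ] ((b1 j) (b0 l) ⊗ₜ[ℂ] b1 l))
      + ∑ j, ∑ l, (b0 j ⊗ₜ[ℂ] (b0 l ⊗ₜ[ℂ] ⁅b1 j, b1 l⁆)) = 0

variable {A : Type*} [CommRing A] [Algebra ℂ A]

/-- `V₁ = span_ℂ{a⁰ᵢ}`. -/
def GeomRMatrixDatum.V1 (D : GeomRMatrixDatum A) : Submodule ℂ A :=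
  Submodule.span ℂ (Set.range D.a0)

/-- `V₂ = span_ℂ{b⁰ⱼ}`. -/
def GeomRMatrixDatum.V2 (D : GeomRMatrixDatum A) : Submodule ℂ A :=
  Submodule.span ℂ (Set.range D.b0)

/-- `V = V₁ + V₂`. -/
def GeomRMatrixDatum.V (D : GeomRMatrixDatum A) : Submodule ℂ A := D.V1 ⊔ D.V2

theorem GeomRMatrixDatum.a0_mem_V (D : GeomRMatrixDatum A) (i : Fin D.m) :
    D.a0 i ∈ D.V :=
  Submodule.mem_sup_left (Submodule.subset_span (Set.mem_range_self i))

theorem GeomRMatrixDatum.b0_mem_V (D : GeomRMatrixDatum A) (j : Fin D.n) :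
    D.b0 j ∈ D.V :=
  Submodule.mem_sup_right (Submodule.subset_span (Set.mem_range_self j))

/-- The operation `(x⋆y)(f) = Σᵢ x(a⁰ᵢ)·y(a¹ᵢ f)` on `V* = Module.Dual ℂ V`. -/
noncomputable def starOp (D : GeomRMatrixDatum A)
    (hA : ∀ i : Fin D.m, ∀ f ∈ D.V, D.a1 i f ∈ D.V)
    (x y : Module.Dual ℂ D.V) : Module.Dual ℂ D.V :=
  ∑ i, x ⟨D.a0 i, D.a0_mem_V i⟩ • (y ∘ₗ ((D.a1 i).toLinearMap.restrict (hA i)))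

/-- The operation `(x∘y)(f) = Σⱼ y(b⁰ⱼ)·x(b¹ⱼ f)` on `V* = Module.Dual ℂ V`. -/
noncomputable def circOp (D : GeomRMatrixDatum A)
    (hB : ∀ j : Fin D.n, ∀ f ∈ D.V, D.b1 j f ∈ D.V)
    (x y : Module.Dual ℂ D.V) : Module.Dual ℂ D.V :=
  ∑ j, y ⟨D.b0 j, D.b0_mem_V j⟩ • (x ∘ₗ ((D.b1 j).toLinearMap.restrict (hB j)))

/-- The bracket `[x,y] = x∘y + y⋆x` on `V*`. -/
noncomputable def bracketOp (D : GeomRMatrixDatum A)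
    (hA : ∀ i : Fin D.m, ∀ f ∈ D.V, D.a1 i f ∈ D.V)
    (hB : ∀ j : Fin D.n, ∀ f ∈ D.V, D.b1 j f ∈ D.V)
    (x y : Module.Dual ℂ D.V) : Module.Dual ℂ D.V :=
  circOp D hB x y + starOp D hA y x

/-- The map `ρ : V* → Der(A)`, `ρ(x) = Σᵢ x(a⁰ᵢ)·a¹ᵢ + Σⱼ x(b⁰ⱼ)·b¹ⱼ`. -/
noncomputable def rhoOp (D : GeomRMatrixDatum A)
    (x : Module.Dual ℂ D.V) : Derivation ℂ A A :=
  ∑ i, x ⟨D.a0 i, D.a0_mem_V i⟩ • D.a1 i + ∑ j, x ⟨D.b0 j, D.b0_mem_V j⟩ • D.b1 j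


noncomputable def phi1 (X Y : A →ₗ[ℂ] ℂ) :
    (Derivation ℂ A A) ⊗[ℂ] (A ⊗[ℂ] A) →ₗ[ℂ] Derivation ℂ A A :=
  (TensorProduct.rid ℂ (Derivation ℂ A A)).toLinearMap ∘ₗ
    TensorProduct.map LinearMap.id ((LinearMap.mul' ℂ ℂ) ∘ₗ TensorProduct.map X Y)

@[simp] lemma phi1_tmul (X Y : A →ₗ[ℂ] ℂ) (d : Derivation ℂ A A) (u v : A) :
    phi1 X Y (d ⊗ₜ[ℂ] (u ⊗ₜ[ℂ] v)) = (X u * Y v) • d := by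
  simp [phi1, TensorProduct.rid_tmul]

noncomputable def phi2 (X Y : A →ₗ[ℂ] ℂ) :
    A ⊗[ℂ] ((Derivation ℂ A A) ⊗[ℂ] A) →ₗ[ℂ] Derivation ℂ A A :=
  (TensorProduct.lid ℂ (Derivation ℂ A A)).toLinearMap ∘ₗ
    TensorProduct.map X ((TensorProduct.rid ℂ (Derivation ℂ A A)).toLinearMap ∘ₗ
      TensorProduct.map LinearMap.id Y)

@[simp] lemma phi2_tmul (X Y : A →ₗ[ℂ] ℂ) (d : Derivation ℂ A A) (u v : A) :
    phi2 X Y (u ⊗ₜ[ℂ] (d ⊗ₜ[ℂ] v)) = (X u * Y v) • d := by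
  simp [phi2, TensorProduct.rid_tmul, TensorProduct.lid_tmul, smul_smul, mul_comm]

noncomputable def phi3 (X Y : A →ₗ[ℂ] ℂ) :
    A ⊗[ℂ] (A ⊗[ℂ] (Derivation ℂ A A)) →ₗ[ℂ] Derivation ℂ A A :=
  (TensorProduct.lid ℂ (Derivation ℂ A A)).toLinearMap ∘ₗ
    TensorProduct.map X ((TensorProduct.lid ℂ (Derivation ℂ A A)).toLinearMap ∘ₗ
      TensorProduct.map Y LinearMap.id)

@[simp] lemma phi3_tmul (X Y : A →ₗ[ℂ] ℂ) (d : Derivation ℂ A A) (u v : A) :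
    phi3 X Y (u ⊗ₜ[ℂ] (v ⊗ₜ[ℂ] d)) = (X u * Y v) • d := by
  simp [phi3, TensorProduct.lid_tmul, smul_smul, mul_comm]

lemma sum_lie' {ι : Type*} (s : Finset ι) (f : ι → Derivation ℂ A A) (e : Derivation ℂ A A) :
    ⁅∑ i ∈ s, f i, e⁆ = ∑ i ∈ s, ⁅f i, e⁆ := by
  induction s using Finset.cons_induction with
  | empty => simp
  | cons a s ha ih => simp [Finset.sum_cons, add_lie, ih]

lemma lie_sum' {ι : Type*} (s : Finset ι) (e : Derivation ℂ A A) (f : ι → Derivation ℂ A A) :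
    ⁅e, ∑ i ∈ s, f i⁆ = ∑ i ∈ s, ⁅e, f i⁆ := by
  induction s using Finset.cons_induction with
  | empty => simp
  | cons a s ha ih => simp [Finset.sum_cons, lie_add, ih]

/-- `ρ` is a Lie algebra homomorphism `(V*, [·,·]) → Der(A)`. -/
theorem rho_is_lie_hom (D : GeomRMatrixDatum A)
    (hA : ∀ i : Fin D.m, ∀ f ∈ D.V, D.a1 i f ∈ D.V)
    (hB : ∀ j : Fin D.n, ∀ f ∈ D.V, D.b1 j f ∈ D.V)
    (x y : Module.Dual ℂ D.V) :
    rhoOp D (bracketOp D hA hB x y) = ⁅rhoOp D x, rhoOp D y⁆ := by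
  obtain ⟨X, hX⟩ := LinearMap.exists_extend x
  obtain ⟨Y, hY⟩ := LinearMap.exists_extend y
  have hx : ∀ v : D.V, x v = X (v : A) := fun v => by rw [← hX]; rfl
  have hy : ∀ v : D.V, y v = Y (v : A) := fun v => by rw [← hY]; rfl
  have h1 := congrArg (phi1 X Y) D.E1
  have h2 := congrArg (phi2 X Y) D.E2
  have h2' := congrArg (phi2 Y X) D.E2
  have h3' := congrArg (phi3 Y X) D.E3
  simp only [map_sum, map_add, map_zero, phi1_tmul, phi2_tmul, phi3_tmul] at h1 h2 h2' h3'
  -- canonical left form L and right form T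
  have lhs_eq : rhoOp D (bracketOp D hA hB x y)
      = ∑ k : Fin D.m, ∑ j : Fin D.n, (Y (D.b0 j) * X ((D.b1 j) (D.a0 k))) • D.a1 k
      + ∑ k : Fin D.m, ∑ i : Fin D.m, (Y (D.a0 i) * X ((D.a1 i) (D.a0 k))) • D.a1 k
      + (∑ l : Fin D.n, ∑ j : Fin D.n, (Y (D.b0 j) * X ((D.b1 j) (D.b0 l))) • D.b1 l
      + ∑ l : Fin D.n, ∑ i : Fin D.m, (Y (D.a0 i) * X ((D.a1 i) (D.b0 l))) • D.b1 l) := by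
    simp only [rhoOp, bracketOp, circOp, starOp, LinearMap.add_apply, LinearMap.sum_apply,
      LinearMap.smul_apply, LinearMap.coe_comp, Function.comp_apply, LinearMap.restrict_apply,
      hx, hy, smul_eq_mul, add_smul, Finset.sum_smul, Finset.sum_add_distrib,
      Derivation.coeFn_coe]
  have rhs_eq : (⁅rhoOp D x, rhoOp D y⁆ : Derivation ℂ A A)
      = ∑ k : Fin D.m, ∑ i : Fin D.m, (Y (D.a0 k) * X (D.a0 i)) • ⁅D.a1 i, D.a1 k⁆
      + ∑ k : Fin D.m, ∑ j : Fin D.n, (Y (D.a0 k) * X (D.b0 j)) • ⁅D.b1 j, D.a1 k⁆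
      + (∑ l : Fin D.n, ∑ i : Fin D.m, (Y (D.b0 l) * X (D.a0 i)) • ⁅D.a1 i, D.b1 l⁆
      + ∑ l : Fin D.n, ∑ j : Fin D.n, (Y (D.b0 l) * X (D.b0 j)) • ⁅D.b1 j, D.b1 l⁆) := by
    rw [rhoOp, rhoOp]
    simp only [add_lie, lie_add, sum_lie', lie_sum', smul_lie, lie_smul, smul_smul,
      Finset.smul_sum, hx, hy]
  rw [lhs_eq, rhs_eq]
  -- identities derived from E1-E3
  have eaa : (∑ k : Fin D.m, ∑ i : Fin D.m, (Y (D.a0 k) * X (D.a0 i)) • ⁅D.a1 i, D.a1 k⁆ :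
        Derivation ℂ A A)
      = ∑ i : Fin D.m, ∑ k : Fin D.m, (X ((D.a1 k) (D.a0 i)) * Y (D.a0 k)) • D.a1 i
      + ∑ i : Fin D.m, ∑ l : Fin D.n, (X (D.b0 l) * Y ((D.b1 l) (D.a0 i))) • D.a1 i := by
    rw [← h1, Finset.sum_comm]
    exact Finset.sum_congr rfl fun i _ => Finset.sum_congr rfl fun k _ => by rw [mul_comm]
  have eba : (∑ k : Fin D.m, ∑ j : Fin D.n, (Y (D.a0 k) * X (D.b0 j)) • ⁅D.b1 j, D.a1 k⁆ :
        Derivation ℂ A A)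
      = ∑ j : Fin D.n, ∑ k : Fin D.m, (X ((D.a1 k) (D.b0 j)) * Y (D.a0 k)) • D.b1 j
      - ∑ j : Fin D.n, ∑ k : Fin D.m, (X (D.b0 j) * Y ((D.b1 j) (D.a0 k))) • D.a1 k := by
    have hs : (∑ j : Fin D.n, ∑ k : Fin D.m,
          (X (D.b0 j) * Y (D.a0 k)) • ⁅D.b1 j, D.a1 k⁆ : Derivation ℂ A A)
        = ∑ j : Fin D.n, ∑ k : Fin D.m, (X ((D.a1 k) (D.b0 j)) * Y (D.a0 k)) • D.b1 j
        - ∑ j : Fin D.n, ∑ k : Fin D.m, (X (D.b0 j) * Y ((D.b1 j) (D.a0 k))) • D.a1 k :=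
      eq_sub_of_add_eq h2.symm
    rw [← hs, Finset.sum_comm]
    exact Finset.sum_congr rfl fun j _ => Finset.sum_congr rfl fun k _ => by rw [mul_comm]
  have eab : (∑ l : Fin D.n, ∑ i : Fin D.m, (Y (D.b0 l) * X (D.a0 i)) • ⁅D.a1 i, D.b1 l⁆ :
        Derivation ℂ A A)
      = ∑ j : Fin D.n, ∑ k : Fin D.m, (Y (D.b0 j) * X ((D.b1 j) (D.a0 k))) • D.a1 k
      - ∑ j : Fin D.n, ∑ k : Fin D.m, (Y ((D.a1 k) (D.b0 j)) * X (D.a0 k)) • D.b1 j := by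
    have hs : (∑ j : Fin D.n, ∑ k : Fin D.m,
          (Y (D.b0 j) * X (D.a0 k)) • ⁅D.b1 j, D.a1 k⁆ : Derivation ℂ A A)
        = ∑ j : Fin D.n, ∑ k : Fin D.m, (Y ((D.a1 k) (D.b0 j)) * X (D.a0 k)) • D.b1 j
        - ∑ j : Fin D.n, ∑ k : Fin D.m, (Y (D.b0 j) * X ((D.b1 j) (D.a0 k))) • D.a1 k :=
      eq_sub_of_add_eq h2'.symm
    calc (∑ l : Fin D.n, ∑ i : Fin D.m,
            (Y (D.b0 l) * X (D.a0 i)) • ⁅D.a1 i, D.b1 l⁆ : Derivation ℂ A A)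
        = -∑ j : Fin D.n, ∑ k : Fin D.m, (Y (D.b0 j) * X (D.a0 k)) • ⁅D.b1 j, D.a1 k⁆ := by
          rw [← Finset.sum_neg_distrib]
          refine Finset.sum_congr rfl fun j _ => ?_
          rw [← Finset.sum_neg_distrib]
          exact Finset.sum_congr rfl fun k _ => by rw [← lie_skew, smul_neg]
      _ = _ := by rw [hs, neg_sub]
  have ebb : (∑ l : Fin D.n, ∑ j : Fin D.n, (Y (D.b0 l) * X (D.b0 j)) • ⁅D.b1 j, D.b1 l⁆ :
        Derivation ℂ A A)
      = ∑ i : Fin D.m, ∑ l : Fin D.n, (Y ((D.a1 i) (D.b0 l)) * X (D.a0 i)) • D.b1 l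
      + ∑ j : Fin D.n, ∑ l : Fin D.n, (Y (D.b0 j) * X ((D.b1 j) (D.b0 l))) • D.b1 l := by
    have hs : (∑ i : Fin D.m, ∑ l : Fin D.n,
            (Y ((D.a1 i) (D.b0 l)) * X (D.a0 i)) • D.b1 l : Derivation ℂ A A)
        + ∑ j : Fin D.n, ∑ l : Fin D.n, (Y (D.b0 j) * X ((D.b1 j) (D.b0 l))) • D.b1 l
        = -∑ j : Fin D.n, ∑ l : Fin D.n, (Y (D.b0 j) * X (D.b0 l)) • ⁅D.b1 j, D.b1 l⁆ :=
      add_eq_zero_iff_eq_neg.mp h3'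
    rw [hs, ← Finset.sum_neg_distrib]
    refine Finset.sum_congr rfl fun l _ => ?_
    rw [← Finset.sum_neg_distrib]
    exact Finset.sum_congr rfl fun j _ => by rw [← lie_skew, smul_neg]
  rw [eaa, eba, eab, ebb]
  -- reindexing identities
  have eQ : (∑ i : Fin D.m, ∑ l : Fin D.n,
        (X (D.b0 l) * Y ((D.b1 l) (D.a0 i))) • D.a1 i : Derivation ℂ A A)
      = ∑ j : Fin D.n, ∑ k : Fin D.m, (X (D.b0 j) * Y ((D.b1 j) (D.a0 k))) • D.a1 k :=
    Finset.sum_comm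
  have eT : (∑ i : Fin D.m, ∑ l : Fin D.n,
        (Y ((D.a1 i) (D.b0 l)) * X (D.a0 i)) • D.b1 l : Derivation ℂ A A)
      = ∑ j : Fin D.n, ∑ k : Fin D.m, (Y ((D.a1 k) (D.b0 j)) * X (D.a0 k)) • D.b1 j :=
    Finset.sum_comm
  have eL1 : (∑ k : Fin D.m, ∑ j : Fin D.n,
        (Y (D.b0 j) * X ((D.b1 j) (D.a0 k))) • D.a1 k : Derivation ℂ A A)
      = ∑ j : Fin D.n, ∑ k : Fin D.m, (Y (D.b0 j) * X ((D.b1 j) (D.a0 k))) • D.a1 k :=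
    Finset.sum_comm
  have eL3 : (∑ l : Fin D.n, ∑ j : Fin D.n,
        (Y (D.b0 j) * X ((D.b1 j) (D.b0 l))) • D.b1 l : Derivation ℂ A A)
      = ∑ j : Fin D.n, ∑ l : Fin D.n, (Y (D.b0 j) * X ((D.b1 j) (D.b0 l))) • D.b1 l :=
    Finset.sum_comm
  have eL2 : (∑ k : Fin D.m, ∑ i : Fin D.m,
        (Y (D.a0 i) * X ((D.a1 i) (D.a0 k))) • D.a1 k : Derivation ℂ A A)
      = ∑ i : Fin D.m, ∑ k : Fin D.m, (X ((D.a1 k) (D.a0 i)) * Y (D.a0 k)) • D.a1 i :=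
    Finset.sum_congr rfl fun _ _ => Finset.sum_congr rfl fun _ _ => by rw [mul_comm]
  have eL4 : (∑ l : Fin D.n, ∑ i : Fin D.m,
        (Y (D.a0 i) * X ((D.a1 i) (D.b0 l))) • D.b1 l : Derivation ℂ A A)
      = ∑ j : Fin D.n, ∑ k : Fin D.m, (X ((D.a1 k) (D.b0 j)) * Y (D.a0 k)) • D.b1 j :=
    Finset.sum_congr rfl fun _ _ => Finset.sum_congr rfl fun _ _ => by rw [mul_comm]
  rw [eL1, eL2, eL3, eL4, eQ, eT]
  abel
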